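/- Let n ≥ 2, 1 ≤ b ≤ n, λ > 0, σ² ∈ [1/n, 1], β_b = 1 + (b-1)(nσ²-1)/(n-1). Set t₀ = max{0, ⌈(n/b) log(2λn/β_b)⌉}. If a nonnegative sequence ε_t satisfies ε_{t+1} ≤ (1 - bs/n)ε_t + b(s/n)² β_b/(2λ) for every s ∈ (0,1] (the bound holding for each choice of s), and ε_0 ≤ 1, then with s = 1, ε_{t₀} ≤ β_b/(λn). -/

import Mathlib

/-- After `t₀ = max{0, ⌈(n/b) log(2λn/β_b)⌉}` iterations of the recurrence
`ε_{t+1} ≤ (1 - bs/n) ε_t + b(s/n)² β_b/(2λ)` (valid for every `s ∈ (0,1]`),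
starting from `ε_0 ≤ 1`, the dual suboptimality satisfies `ε_{t₀} ≤ β_b/(λn)`. -/
theorem stmt17 (n b : ℕ) (hn : 2 ≤ n) (hb1 : 1 ≤ b) (hbn : b ≤ n)
    (σ2 lam : ℝ) (hσl : 1 / (n : ℝ) ≤ σ2) (hσu : σ2 ≤ 1) (hlam : 0 < lam)
    (βb : ℝ) (hβ : βb = 1 + ((b : ℝ) - 1) * ((n : ℝ) * σ2 - 1) / ((n : ℝ) - 1))
    (ε : ℕ → ℝ) (hpos : ∀ t, 0 ≤ ε t) (hε0 : ε 0 ≤ 1)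
    (hrec : ∀ s : ℝ, 0 < s → s ≤ 1 → ∀ t,
        ε (t + 1) ≤ (1 - (b : ℝ) * s / (n : ℝ)) * ε t
          + (b : ℝ) * (s / (n : ℝ)) ^ 2 * βb / (2 * lam))
    (t0 : ℕ)
    (ht0 : t0 = (max 0 ⌈((n : ℝ) / (b : ℝ)) *
        Real.log (2 * lam * (n : ℝ) / βb)⌉).toNat) :
    ε t0 ≤ βb / (lam * (n : ℝ)) := by
  have hN2 : (2 : ℝ) ≤ (n : ℝ) := by exact_mod_cast hn
  have hN0 : (0 : ℝ) < (n : ℝ) := by linarith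
  have hB1 : (1 : ℝ) ≤ (b : ℝ) := by exact_mod_cast hb1
  have hB0 : (0 : ℝ) < (b : ℝ) := by linarith
  have hBN : (b : ℝ) ≤ (n : ℝ) := by exact_mod_cast hbn
  have hβ1 : (1 : ℝ) ≤ βb := by
    rw [hβ]
    have h1 : (0:ℝ) ≤ (n:ℝ) * σ2 - 1 := by
      have := (div_le_iff₀ hN0).mp hσl
      nlinarith
    have h2 : (0:ℝ) ≤ ((b:ℝ) - 1) * ((n:ℝ) * σ2 - 1) / ((n:ℝ) - 1) := by
      apply div_nonneg
      · nlinarith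
      · linarith
    linarith
  have hβ0 : (0 : ℝ) < βb := by linarith
  set r : ℝ := 1 - (b : ℝ) / (n : ℝ) with hr
  clear_value r
  have hr0 : 0 ≤ r := by
    have : (b : ℝ) / (n : ℝ) ≤ 1 := (div_le_one hN0).mpr hBN
    linarith
  have hr1 : r ≤ 1 := by
    have : 0 < (b : ℝ) / (n : ℝ) := div_pos hB0 hN0
    linarith
  set D : ℝ := βb / (2 * lam * (n : ℝ)) with hD
  clear_value D
  have hD0 : 0 < D := by rw [hD]; positivity
  -- key induction
  have key : ∀ t, ε t ≤ r ^ t + D := by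
    intro t
    induction t with
    | zero => simpa using by linarith [hD0]
    | succ t ih =>
      have h := hrec 1 one_pos le_rfl t
      have hC : (b : ℝ) * (1 / (n : ℝ)) ^ 2 * βb / (2 * lam) = ((b:ℝ)/(n:ℝ)) * D := by
        rw [hD]; field_simp
      have hstep : ε (t+1) ≤ r * ε t + ((b:ℝ)/(n:ℝ)) * D := by
        calc ε (t+1) ≤ (1 - (b : ℝ) * 1 / (n : ℝ)) * ε t
            + (b : ℝ) * (1 / (n : ℝ)) ^ 2 * βb / (2 * lam) := h
          _ = r * ε t + ((b:ℝ)/(n:ℝ)) * D := by rw [hC, hr]; ring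
      have hmul : r * ε t ≤ r * (r ^ t + D) := by
        exact mul_le_mul_of_nonneg_left ih hr0
      have : ε (t+1) ≤ r * (r ^ t + D) + ((b:ℝ)/(n:ℝ)) * D := by linarith
      calc ε (t+1) ≤ r * (r ^ t + D) + ((b:ℝ)/(n:ℝ)) * D := this
        _ = r ^ (t+1) + D := by rw [hr]; ring
  -- bound r ^ t0 ≤ D
  have hrt : r ^ t0 ≤ D := by
    by_cases hcase : 2 * lam * (n : ℝ) / βb ≤ 1
    · have hD1 : 1 ≤ D := by
        rw [hD]
        rw [div_le_one hβ0] at hcase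
        exact (one_le_div (by positivity)).mpr hcase
      calc r ^ t0 ≤ 1 ^ t0 := pow_le_pow_left₀ hr0 hr1 t0
        _ = 1 := one_pow t0
        _ ≤ D := hD1
    · push_neg at hcase
      have hlog : 0 < Real.log (2 * lam * (n : ℝ) / βb) := Real.log_pos hcase
      set x : ℝ := ((n : ℝ) / (b : ℝ)) * Real.log (2 * lam * (n : ℝ) / βb) with hx
      have hxt : x ≤ (t0 : ℝ) := by
        have h1 : (⌈x⌉ : ℝ) ≤ ((max 0 ⌈x⌉ : ℤ) : ℝ) := by
          exact_mod_cast le_max_right 0 ⌈x⌉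
        have h2 : ((max 0 ⌈x⌉ : ℤ) : ℝ) = ((t0 : ℕ) : ℝ) := by
          rw [ht0]
          norm_cast
          exact (Int.toNat_of_nonneg (le_max_left 0 ⌈x⌉)).symm
        calc x ≤ (⌈x⌉ : ℝ) := Int.le_ceil x
          _ ≤ ((max 0 ⌈x⌉ : ℤ) : ℝ) := h1
          _ = (t0 : ℝ) := h2
      have hexp : r ≤ Real.exp (-((b:ℝ)/(n:ℝ))) := by
        have := Real.add_one_le_exp (-((b:ℝ)/(n:ℝ)))
        rw [hr]; linarith
      have hpow : r ^ t0 ≤ Real.exp (-((b:ℝ)/(n:ℝ)) * (t0 : ℝ)) := by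
        calc r ^ t0 ≤ (Real.exp (-((b:ℝ)/(n:ℝ)))) ^ t0 := pow_le_pow_left₀ hr0 hexp t0
          _ = Real.exp (-((b:ℝ)/(n:ℝ)) * (t0 : ℝ)) := by
              rw [← Real.exp_nat_mul]; ring_nf
      have hle : -((b:ℝ)/(n:ℝ)) * (t0 : ℝ) ≤ -Real.log (2 * lam * (n : ℝ) / βb) := by
        have hBN' : 0 < (b:ℝ)/(n:ℝ) := div_pos hB0 hN0
        have : Real.log (2 * lam * (n : ℝ) / βb) ≤ ((b:ℝ)/(n:ℝ)) * (t0 : ℝ) := by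
          have := mul_le_mul_of_nonneg_left hxt (le_of_lt hBN')
          rw [hx] at this
          calc Real.log (2 * lam * (n : ℝ) / βb)
              = ((b:ℝ)/(n:ℝ)) * (((n : ℝ) / (b : ℝ)) * Real.log (2 * lam * (n : ℝ) / βb)) := by
                field_simp
            _ ≤ ((b:ℝ)/(n:ℝ)) * (t0 : ℝ) := this
        linarith
      have : Real.exp (-((b:ℝ)/(n:ℝ)) * (t0 : ℝ)) ≤ D := by
        calc Real.exp (-((b:ℝ)/(n:ℝ)) * (t0 : ℝ))
            ≤ Real.exp (-Real.log (2 * lam * (n : ℝ) / βb)) := Real.exp_le_exp.mpr hle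
          _ = (2 * lam * (n : ℝ) / βb)⁻¹ := by
              rw [Real.exp_neg, Real.exp_log (by positivity)]
          _ = D := by rw [hD]; field_simp
      linarith
  have := key t0
  have hfinal : ε t0 ≤ 2 * D := by linarith
  calc ε t0 ≤ 2 * D := hfinal
    _ = βb / (lam * (n : ℝ)) := by rw [hD]; field_simp
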